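/- Let $\tau(h) = 4\pi(1-h^2)$ on $[-1,1]$ and $b, c \in \mathbb{R}$ with $c > 0$. The metric $G = \left(\frac{1}{\tau(h)} + b^2\tau(h)\right)dh^2 + \tau(h)\,d\phi(d\phi - 2b\,dh) + g_{\mathbb{T}^2}$ on $(\mathbb{T}^2 \times \mathbb{S}^2)$ restricted to $h \in (-1,1)$, where $g_{\mathbb{T}^2} = \frac{1}{c}((a^2+c^2)dx^2 - 2a\,dx\,dy + dy^2)$, is a Riemannian metric (positive definite at every point), and it is compatible with the symplectic form $\omega = dy\wedge dx + d\phi\wedge dh$ in the sense that $G(\cdot,\cdot) = \omega(\cdot, J\cdot)$ for an almost complex structure $J$ determined by $G$ and $\omega$. -/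
import Mathlib


open Real

set_option maxHeartbeats 1000000 in
/-- for `τ(h) = 4π(1-h²)`, `c > 0`, the metric
`G = (1/τ + b²τ) dh² + τ dφ(dφ - 2b dh) + g_{T²}` with
`g_{T²} = (1/c)((a²+c²)dx² - 2a dx dy + dy²)` is positive definite for `h ∈ (-1,1)`
(tangent coordinates `(x, y, φ, h)` indexed `0,1,2,3`), and is compatible with the
symplectic form `ω = dy ∧ dx + dφ ∧ dh`: there is an almost complex structure `J` with
`J² = -1` and `G(·,·) = ω(·, J·)`. -/
theorem stmt_19 (a b c : ℝ) (hc : 0 < c) :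
    ∀ h : ℝ, h ∈ Set.Ioo (-1 : ℝ) 1 →
      let τ : ℝ := 4 * π * (1 - h ^ 2)
      let G : (Fin 4 → ℝ) → (Fin 4 → ℝ) → ℝ := fun u v =>
        (1 / τ + b ^ 2 * τ) * u 3 * v 3 + τ * (u 2 * v 2)
          - b * τ * (u 2 * v 3 + u 3 * v 2)
          + (1 / c) * ((a ^ 2 + c ^ 2) * u 0 * v 0
              - a * (u 0 * v 1 + u 1 * v 0) + u 1 * v 1)
      let ω : (Fin 4 → ℝ) → (Fin 4 → ℝ) → ℝ := fun u v =>
        u 1 * v 0 - u 0 * v 1 + u 2 * v 3 - u 3 * v 2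
      (∀ u : Fin 4 → ℝ, u ≠ 0 → 0 < G u u) ∧
      ∃ J : (Fin 4 → ℝ) →ₗ[ℝ] (Fin 4 → ℝ),
        (∀ u, J (J u) = -u) ∧ ∀ u v, G u v = ω u (J v) := by
  intro h hh τ G ω
  have hτ : 0 < τ := by
    have h1 : (0:ℝ) < 1 - h ^ 2 := by nlinarith [hh.1, hh.2]
    have hπ := Real.pi_pos
    show (0:ℝ) < 4 * π * (1 - h ^ 2)
    positivity
  clear_value τ
  have hτ' : τ ≠ 0 := ne_of_gt hτ
  have hc' : c ≠ 0 := ne_of_gt hc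
  constructor
  · intro u hu
    have key : G u u = (1 / τ) * u 3 ^ 2 + τ * (b * u 3 - u 2) ^ 2
        + (1 / c) * ((a * u 0 - u 1) ^ 2 + c ^ 2 * u 0 ^ 2) := by
      show _ = _
      ring
    have h0 : u 0 ≠ 0 ∨ u 1 ≠ 0 ∨ u 2 ≠ 0 ∨ u 3 ≠ 0 := by
      by_contra hcon
      push_neg at hcon
      apply hu
      funext i
      fin_cases i <;> simp [hcon.1, hcon.2.1, hcon.2.2.1, hcon.2.2.2]
    rw [key]
    have hτi : 0 < 1 / τ := by positivity
    have hci : 0 < 1 / c := by positivity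
    have n1 : 0 ≤ (1 / τ) * u 3 ^ 2 := by positivity
    have n2 : 0 ≤ τ * (b * u 3 - u 2) ^ 2 := by positivity
    have n3 : 0 ≤ (1 / c) * ((a * u 0 - u 1) ^ 2 + c ^ 2 * u 0 ^ 2) := by positivity
    rcases h0 with h0 | h0 | h0 | h0
    · have hp : (0:ℝ) < (a * u 0 - u 1) ^ 2 + c ^ 2 * u 0 ^ 2 := by
        nlinarith [sq_nonneg (a * u 0 - u 1), mul_pos (mul_pos hc hc) (sq_pos_of_ne_zero h0)]
      nlinarith [mul_pos hci hp]
    · rcases eq_or_ne (u 0) 0 with h00 | h00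
      · have hp : (0:ℝ) < (a * u 0 - u 1) ^ 2 + c ^ 2 * u 0 ^ 2 := by
        
          have : (a * u 0 - u 1) ^ 2 > 0 := by
            apply sq_pos_of_ne_zero; rw [h00]; simpa using h0
          nlinarith [sq_nonneg (c * u 0)]
        nlinarith [mul_pos hci hp]
      · have hp : (0:ℝ) < (a * u 0 - u 1) ^ 2 + c ^ 2 * u 0 ^ 2 := by
          nlinarith [sq_nonneg (a * u 0 - u 1), mul_pos (mul_pos hc hc) (sq_pos_of_ne_zero h00)]
        nlinarith [mul_pos hci hp]
    · rcases eq_or_ne (u 3) 0 with h33 | h33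
      · have hp : (0:ℝ) < (b * u 3 - u 2) ^ 2 := by
          apply sq_pos_of_ne_zero; rw [h33]; simpa using h0
        nlinarith [mul_pos hτ hp]
      · nlinarith [mul_pos hτi (sq_pos_of_ne_zero h33)]
    · nlinarith [mul_pos hτi (sq_pos_of_ne_zero h0)]
  · set p : Fin 4 → ((Fin 4 → ℝ) →ₗ[ℝ] ℝ) := fun i => LinearMap.proj i with hp
    refine ⟨LinearMap.pi
      ![(-(a/c)) • p 0 + (1/c) • p 1,
        (-((a^2+c^2)/c)) • p 0 + (a/c) • p 1,
        (b*τ) • p 2 + (-(1/τ + b^2*τ)) • p 3,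
        τ • p 2 + (-(b*τ)) • p 3], ?_, ?_⟩
    · intro u
      clear_value G ω
      clear G ω
      funext i
      fin_cases i <;>
        simp [LinearMap.pi_apply, hp, Matrix.cons_val_zero, Matrix.cons_val_one,
          Matrix.head_cons, Matrix.cons_val_two, Matrix.cons_val_three,
          Matrix.vecHead, Matrix.vecTail] <;>
        field_simp [hτ', hc'] <;> ring
    · intro u v
      show _ = _
      simp [G, ω, LinearMap.pi_apply, hp, Matrix.cons_val_zero, Matrix.cons_val_one,
        Matrix.head_cons, Matrix.cons_val_two, Matrix.cons_val_three,
        Matrix.vecHead, Matrix.vecTail]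
      field_simp [hτ', hc']
      ring
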